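/- Determinant optimization identity over the positive-definite cone from the proof of Corollary 8.1. Let A be an r×r real symmetric positive definite matrix and let α, β be real numbers with β > α > 0. Then the supremum, over all r×r real symmetric matrices Y such that Y − A is positive definite, of det(Y − A)^α · det(Y)^{−β} equals det(A)^{α−β} · ( α^α (β − α)^{β−α} / β^β )^r, and it is attained at Y = (β/(β − α)) A. -/

import Mathlib

open Matrix Real


lemma scal_eq {α β : ℝ} (hα : 0 < α) (hβ : α < β) :
    (α / (β - α)) ^ α * ((β / (β - α))) ^ (-β)
      = α ^ α * (β - α) ^ (β - α) / β ^ β := by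
  have hc : (0:ℝ) < β - α := sub_pos.mpr hβ
  have hb : (0:ℝ) < β := hα.trans hβ
  rw [Real.div_rpow hα.le hc.le, Real.rpow_neg (by positivity), Real.div_rpow hb.le hc.le,
    Real.rpow_sub hc]
  field_simp

lemma scal_le {α β : ℝ} (hα : 0 < α) (hβ : α < β) {t : ℝ} (ht : 0 < t) :
    t ^ α * (1 + t) ^ (-β) ≤ α ^ α * (β - α) ^ (β - α) / β ^ β := by
  have hc : (0:ℝ) < β - α := sub_pos.mpr hβ
  have hb : (0:ℝ) < β := hα.trans hβ
  have ht1 : (0:ℝ) < 1 + t := by positivity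
  set s : ℝ := t * (β - α) / α with hs
  have hs0 : 0 < s := by positivity
  have key : s ^ (α / β) ≤ (1 - α / β) * 1 + (α / β) * s := by
    have := Real.geom_mean_le_arith_mean2_weighted
      (w₁ := 1 - α / β) (w₂ := α / β) (p₁ := 1) (p₂ := s)
      (by rw [sub_nonneg]; exact (div_le_one hb).mpr hβ.le)
      (by positivity) zero_le_one hs0.le (by ring)
    simpa using this
  have harith : (1 - α / β) * 1 + (α / β) * s = (β - α) * (1 + t) / β := by
    field_simp [hs]
    rw [hs]; field_simp
  have key2 : s ^ α ≤ ((β - α) * (1 + t) / β) ^ β := by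
    have h1 : (s ^ (α / β)) ^ β ≤ ((1 - α / β) * 1 + (α / β) * s) ^ β :=
      Real.rpow_le_rpow (Real.rpow_nonneg hs0.le _) key hb.le
    rwa [← Real.rpow_mul hs0.le, div_mul_cancel₀ _ hb.ne', harith] at h1
  -- now expand s^α and the RHS
  have hsα : s ^ α = t ^ α * (β - α) ^ α / α ^ α := by
    rw [hs, Real.div_rpow (by positivity) hα.le, Real.mul_rpow ht.le hc.le]
  have hrhs : ((β - α) * (1 + t) / β) ^ β = (β - α) ^ β * (1 + t) ^ β / β ^ β := by
    rw [Real.div_rpow (by positivity) hb.le, Real.mul_rpow hc.le ht1.le]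
  rw [hsα, hrhs, div_le_div_iff₀ (by positivity) (by positivity)] at key2
  have hfin : α ^ α * (β - α) ^ (β - α) / β ^ β
      = α ^ α * (β - α) ^ β / ((β - α) ^ α * β ^ β) := by
    rw [Real.rpow_sub hc]; field_simp
  rw [Real.rpow_neg ht1.le, ← div_eq_mul_inv, hfin,
    div_le_div_iff₀ (by positivity) (by positivity)]
  linear_combination key2


lemma posDef_smul' {n : Type*} [Fintype n] {B : Matrix n n ℝ} (hB : B.PosDef)
    {c : ℝ} (hc : 0 < c) : (c • B).PosDef := by
  exact hB.smul hc

lemma posDef_conj' {n : Type*} [Fintype n] [DecidableEq n] {B C : Matrix n n ℝ}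
    (hB : B.PosDef) (hC : IsUnit C.det) : (Cᴴ * B * C).PosDef := by
  refine PosDef.of_dotProduct_mulVec_pos (isHermitian_conjTranspose_mul_mul C hB.1) fun x hx => ?_
  have hx' : C *ᵥ x ≠ 0 := by
    intro h
    apply hx
    have : C⁻¹ *ᵥ (C *ᵥ x) = x := by
      rw [mulVec_mulVec, nonsing_inv_mul _ hC, one_mulVec]
    rw [h, mulVec_zero] at this
    exact this.symm
  simpa only [star_mulVec, dotProduct_mulVec, vecMul_vecMul] using hB.dotProduct_mulVec_pos hx'

lemma det_one_add_spectral {n : Type*} [Fintype n] [DecidableEq n] {M : Matrix n n ℝ}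
    (hM : M.IsHermitian) : (1 + M).det = ∏ i, (1 + hM.eigenvalues i) := by
  set U : Matrix n n ℝ := (hM.eigenvectorUnitary : Matrix n n ℝ)
  have hU : U * star U = 1 := (Matrix.mem_unitaryGroup_iff).mp hM.eigenvectorUnitary.2
  have h1 : 1 + M = U * (1 + diagonal (RCLike.ofReal ∘ hM.eigenvalues)) * star U := by
    rw [mul_add, add_mul, mul_one, hU]
    conv_lhs => rw [hM.spectral_theorem, Unitary.conjStarAlgAut_apply]
  have hU' : star U * U = 1 := (Matrix.mem_unitaryGroup_iff').mp hM.eigenvectorUnitary.2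
  rw [h1, det_mul, det_mul, mul_comm, ← mul_assoc, ← det_mul, hU']
  simp [← diagonal_one, diagonal_add, det_diagonal]

lemma core_bound {r : ℕ} {A B : Matrix (Fin r) (Fin r) ℝ} (hA : A.PosDef) (hB : B.PosDef)
    {α β : ℝ} (hα : 0 < α) (hβ : α < β) :
    B.det ^ α * (A + B).det ^ (-β)
      ≤ A.det ^ (α - β) * (α ^ α * (β - α) ^ (β - α) / β ^ β) ^ r := by
  open scoped MatrixOrder in
  set S := CFC.sqrt A with hSdef
  open scoped MatrixOrder in
  have hSS : S * S = A := CFC.sqrt_mul_sqrt_self A hA.posSemidef.nonneg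
  open scoped MatrixOrder in
  have hSh : S.IsHermitian := (CFC.sqrt_nonneg A).posSemidef.1
  have hdS2 : S.det * S.det = A.det := by rw [← det_mul, hSS]
  have hdS : S.det ≠ 0 := by
    intro h; have := hA.det_pos; rw [← hdS2, h, mul_zero] at this; exact lt_irrefl _ this
  set T := S⁻¹ with hTdef
  have hTS : T * S = 1 := nonsing_inv_mul _ hdS.isUnit
  have hST : S * T = 1 := mul_nonsing_inv _ hdS.isUnit
  have hTh : Tᴴ = T := by rw [hTdef, conjTranspose_nonsing_inv, hSh.eq]
  have hdT : T.det = S.det⁻¹ := by rw [hTdef, det_nonsing_inv, Ring.inverse_eq_inv]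
  set M := Tᴴ * B * T with hMdef
  have hM : M.PosDef := posDef_conj' hB (by rw [hdT]; exact (inv_ne_zero hdS).isUnit)
  have hSMS : S * M * S = B := by
    rw [hMdef, hTh]
    simp only [← mul_assoc, hST, one_mul]
    rw [mul_assoc, hTS, mul_one]
  have hdetM : B.det = A.det * M.det := by
    rw [← hSMS, det_mul, det_mul, ← hdS2]; ring
  have h1M : A + B = S * (1 + M) * S := by
    rw [mul_add, mul_one, add_mul, hSS, hSMS]
  have hdet1M : (A + B).det = A.det * (1 + M).det := by
    rw [h1M, det_mul, det_mul, ← hdS2]; ring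
  set ev := hM.1.eigenvalues with hevdef
  have hev : ∀ i, 0 < ev i := hM.eigenvalues_pos
  have hdetMprod : M.det = ∏ i, ev i := by simpa using hM.1.det_eq_prod_eigenvalues
  have hdet1Mprod : (1 + M).det = ∏ i, (1 + ev i) := det_one_add_spectral hM.1
  have hMpos : 0 < M.det := hM.det_pos
  have h1Mpos : (0:ℝ) < (1 + M).det := by
    rw [hdet1Mprod]
    exact Finset.prod_pos fun i _ => by have := hev i; positivity
  have hAd : 0 < A.det := hA.det_pos
  calc B.det ^ α * (A + B).det ^ (-β)
      = (A.det * M.det) ^ α * (A.det * (1 + M).det) ^ (-β) := by rw [hdetM, hdet1M]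
    _ = A.det ^ (α - β) * (M.det ^ α * (1 + M).det ^ (-β)) := by
        rw [Real.mul_rpow hAd.le hMpos.le, Real.mul_rpow hAd.le h1Mpos.le,
          show α - β = α + (-β) by ring, Real.rpow_add hAd]
        ring
    _ = A.det ^ (α - β) * ∏ i, (ev i ^ α * (1 + ev i) ^ (-β)) := by
        rw [hdetMprod, hdet1Mprod,
          ← Real.finset_prod_rpow _ _ (fun i _ => (hev i).le) α,
          ← Real.finset_prod_rpow _ _ (fun i _ => by have := hev i; positivity) (-β),
          ← Finset.prod_mul_distrib]
    _ ≤ A.det ^ (α - β) * ∏ _i : Fin r, (α ^ α * (β - α) ^ (β - α) / β ^ β) := by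
        refine mul_le_mul_of_nonneg_left ?_ (Real.rpow_nonneg hAd.le _)
        exact Finset.prod_le_prod (fun i _ => by have := hev i; positivity)
          (fun i _ => scal_le hα hβ (hev i))
    _ = A.det ^ (α - β) * (α ^ α * (β - α) ^ (β - α) / β ^ β) ^ r := by
        rw [Finset.prod_const, Finset.card_univ, Fintype.card_fin]


lemma pow_rpow' {x : ℝ} (hx : 0 ≤ x) (n : ℕ) (y : ℝ) : (x ^ n) ^ y = (x ^ y) ^ n := by
  rw [← Real.rpow_natCast x n, ← Real.rpow_mul hx, mul_comm, Real.rpow_mul hx, Real.rpow_natCast]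

/-- **Determinant optimization identity over the positive-definite cone** (from
the proof of Corollary 8.1 of Pensky, "Solution of linear ill-posed problems
using overcomplete dictionaries").  For an `r×r` real symmetric positive
definite `A` and `β > α > 0`, the supremum over symmetric `Y` with `Y − A`
positive definite of `det(Y−A)^α det(Y)^{−β}` equals
`det(A)^{α−β} (α^α(β−α)^{β−α}/β^β)^r`, attained at `Y = (β/(β−α)) A`. -/
theorem determinant_optimization_identity
    {r : ℕ} (A : Matrix (Fin r) (Fin r) ℝ) (hA : A.PosDef)
    (α β : ℝ) (hα : 0 < α) (hβ : α < β) :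
    (((β / (β - α)) • A - A).det ^ α * ((β / (β - α)) • A).det ^ (-β)
        = A.det ^ (α - β) * (α ^ α * (β - α) ^ (β - α) / β ^ β) ^ r) ∧
    IsGreatest
      { x : ℝ | ∃ Y : Matrix (Fin r) (Fin r) ℝ,
          Y.IsSymm ∧ (Y - A).PosDef ∧ x = (Y - A).det ^ α * Y.det ^ (-β) }
      (A.det ^ (α - β) * (α ^ α * (β - α) ^ (β - α) / β ^ β) ^ r) := by
  have hc : (0:ℝ) < β - α := sub_pos.mpr hβ
  have hb : (0:ℝ) < β := hα.trans hβ
  have hAd : 0 < A.det := hA.det_pos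
  have hYA : (β / (β - α)) • A - A = (α / (β - α)) • A := by
    have h1 : β / (β - α) - 1 = α / (β - α) := by field_simp; ring
    rw [← h1, sub_smul, one_smul]
  have heq : ((β / (β - α)) • A - A).det ^ α * ((β / (β - α)) • A).det ^ (-β)
      = A.det ^ (α - β) * (α ^ α * (β - α) ^ (β - α) / β ^ β) ^ r := by
    rw [hYA, det_smul, det_smul, Fintype.card_fin,
      Real.mul_rpow (by positivity) hAd.le, Real.mul_rpow (by positivity) hAd.le,
      pow_rpow' (by positivity) r α, pow_rpow' (by positivity) r (-β),
      show α - β = α + (-β) by ring, Real.rpow_add hAd, ← scal_eq hα hβ, mul_pow]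
    ring
  refine ⟨heq, ⟨⟨(β / (β - α)) • A, ?_, ?_, heq.symm⟩, ?_⟩⟩
  · rw [Matrix.IsSymm, transpose_smul]
    congr 1
    rw [← conjTranspose_eq_transpose_of_trivial, hA.1.eq]
  · rw [hYA]
    exact posDef_smul' hA (by positivity)
  · rintro x ⟨Y, hYsymm, hYApd, rfl⟩
    have hY : Y = A + (Y - A) := by rw [add_sub_cancel]
    calc (Y - A).det ^ α * Y.det ^ (-β)
        = (Y - A).det ^ α * (A + (Y - A)).det ^ (-β) := by rw [← hY]
      _ ≤ A.det ^ (α - β) * (α ^ α * (β - α) ^ (β - α) / β ^ β) ^ r :=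
          core_bound hA hYApd hα hβ
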